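/- Consider two facilities with capacities k_1, k_2 (k_1 + k_2 < n) to be located among n agents in [0,1]^2 by a 2-dimensional percentile mechanism. If the 2-dimensional percentile mechanism is Equilibrium Stable, then each of its coordinate percentile mechanisms is Equilibrium Stable for the corresponding one-dimensional problem: if some coordinate percentile mechanism admits a one-dimensional instance whose pure Nash Equilibria yield different Social Welfare values, then embedding that instance on the corresponding axis (setting the other coordinate of every agent to 0) yields a 2-dimensional instance on which the percentile mechanism's output induces pure Nash Equilibria with different Social Welfare values. -/

import Mathlib

open scoped Classical

noncomputable section

/-- Agent `i'` precedes agent `i` at a facility located at `y`: it is strictly closer,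
or equally close with higher priority (smaller index). -/
def Prec {n : ℕ} (x : Fin n → ℝ) (y : ℝ) (i' i : Fin n) : Prop :=
  |x i' - y| < |x i - y| ∨ (|x i' - y| = |x i - y| ∧ i' < i)

/-- Utility of agent `i` in the FCFS game: positions `x`, facility locations `y`,
capacities `k`, strategy profile `s`.  Agent `i` is served by facility `s i` iff fewer
than `k (s i)` agents selecting `s i` precede it. -/
def utility {n m : ℕ} (x : Fin n → ℝ) (y : Fin m → ℝ) (k : Fin m → ℕ)
    (s : Fin n → Fin m) (i : Fin n) : ℝ :=
  if {i' | s i' = s i ∧ Prec x (y (s i)) i' i}.ncard < k (s i)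
  then 1 - |x i - y (s i)| else 0

/-- Pure Nash equilibrium of the FCFS game. -/
def isNE {n m : ℕ} (x : Fin n → ℝ) (y : Fin m → ℝ) (k : Fin m → ℕ)
    (s : Fin n → Fin m) : Prop :=
  ∀ (i : Fin n) (j : Fin m),
    utility x y k (Function.update s i j) i ≤ utility x y k s i

/-- Social welfare of a strategy profile. -/
def SW {n m : ℕ} (x : Fin n → ℝ) (y : Fin m → ℝ) (k : Fin m → ℕ)
    (s : Fin n → Fin m) : ℝ :=
  ∑ i, utility x y k s i

def InUnit {N : ℕ} (x : Fin N → ℝ) : Prop := ∀ i, x i ∈ Set.Icc (0 : ℝ) 1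

/-- The `i`-th (0-based) smallest entry of `x` (junk value `0` out of range). -/
def sortedVal {n : ℕ} (x : Fin n → ℝ) (i : ℕ) : ℝ :=
  if h : i < n then x (Tuple.sort x ⟨i, h⟩) else 0

/-- The 1-based index `⌊(n-1)v⌋ + 1` used by the percentile mechanism. -/
def percIdx (n : ℕ) (v : ℝ) : ℕ := ⌊((n : ℝ) - 1) * v⌋.toNat + 1

/-- The location selected by the percentile `v`: the `(⌊(n-1)v⌋+1)`-th sorted report. -/
def percLoc {n : ℕ} (x : Fin n → ℝ) (v : ℝ) : ℝ :=
  sortedVal x (⌊((n : ℝ) - 1) * v⌋.toNat)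

/-- The percentile mechanism induced by the percentile vector `v`. -/
def PM {n m : ℕ} (v : Fin m → ℝ) : (Fin n → ℝ) → Fin m → ℝ :=
  fun x j => percLoc x (v j)

/-- A mechanism is Equilibrium Stable if on every instance all pure Nash equilibria of the
induced FCFS game yield the same Social Welfare. -/
def EquilibriumStable {n m : ℕ} (k : Fin m → ℕ)
    (M : (Fin n → ℝ) → Fin m → ℝ) : Prop :=
  ∀ x, InUnit x → ∀ s s', isNE x (M x) k s → isNE x (M x) k s' →
    SW x (M x) k s = SW x (M x) k s'

/-- A mechanism is absolutely truthful if no agent can increase its best-response utility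
by misreporting, whatever the fixed strategies of the others. -/
def AbsolutelyTruthful {n m : ℕ} (k : Fin m → ℕ)
    (M : (Fin n → ℝ) → Fin m → ℝ) : Prop :=
  ∀ x, InUnit x → ∀ (i : Fin n) (x' : ℝ), x' ∈ Set.Icc (0 : ℝ) 1 →
    ∀ s : Fin n → Fin m,
      (⨆ si : Fin m, utility x (M (Function.update x i x')) k (Function.update s i si) i) ≤
      (⨆ si : Fin m, utility x (M x) k (Function.update s i si) i)

/-- Optimal Social Welfare over facility locations in `[0,1]^m` and Nash equilibria. -/
def SWopt {n m : ℕ} (k : Fin m → ℕ) (x : Fin n → ℝ) : ℝ :=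
  sSup {w | ∃ y : Fin m → ℝ, InUnit y ∧ ∃ s, isNE x y k s ∧ w = SW x y k s}

/-- Social Welfare achieved by a mechanism (common value over all NE for ES mechanisms). -/
def SWmech {n m : ℕ} (k : Fin m → ℕ) (M : (Fin n → ℝ) → Fin m → ℝ)
    (x : Fin n → ℝ) : ℝ :=
  sSup {w | ∃ s, isNE x (M x) k s ∧ w = SW x (M x) k s}

/-- Approximation ratio of a mechanism. -/
def approxRatio {n m : ℕ} (k : Fin m → ℕ) (M : (Fin n → ℝ) → Fin m → ℝ) : ℝ :=
  sSup {r | ∃ x : Fin n → ℝ, InUnit x ∧ r = SWopt k x / SWmech k M x}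

end

noncomputable section

/-- Euclidean distance in the plane (points given as `Fin 2 → ℝ`). -/
def dist2 (a b : Fin 2 → ℝ) : ℝ := Real.sqrt (∑ l, (a l - b l) ^ 2)

/-- Agent `i'` precedes agent `i` at a facility located at `y` (2-dimensional). -/
def Prec2 {n : ℕ} (x : Fin n → Fin 2 → ℝ) (y : Fin 2 → ℝ) (i' i : Fin n) : Prop :=
  dist2 (x i') y < dist2 (x i) y ∨ (dist2 (x i') y = dist2 (x i) y ∧ i' < i)

/-- Utility of agent `i` in the 2-dimensional FCFS game: a served agent gets
`√2 - d(xᵢ, y_{sᵢ})`, an unserved agent gets `0`. -/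
def utility2 {n m : ℕ} (x : Fin n → Fin 2 → ℝ) (y : Fin m → Fin 2 → ℝ)
    (k : Fin m → ℕ) (s : Fin n → Fin m) (i : Fin n) : ℝ :=
  if {i' | s i' = s i ∧ Prec2 x (y (s i)) i' i}.ncard < k (s i)
  then Real.sqrt 2 - dist2 (x i) (y (s i)) else 0

/-- Pure Nash equilibrium of the 2-dimensional FCFS game. -/
def isNE2 {n m : ℕ} (x : Fin n → Fin 2 → ℝ) (y : Fin m → Fin 2 → ℝ)
    (k : Fin m → ℕ) (s : Fin n → Fin m) : Prop :=
  ∀ (i : Fin n) (j : Fin m),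
    utility2 x y k (Function.update s i j) i ≤ utility2 x y k s i

/-- Social welfare in the 2-dimensional FCFS game. -/
def SW2 {n m : ℕ} (x : Fin n → Fin 2 → ℝ) (y : Fin m → Fin 2 → ℝ)
    (k : Fin m → ℕ) (s : Fin n → Fin m) : ℝ :=
  ∑ i, utility2 x y k s i

def InUnit2 {N : ℕ} (x : Fin N → Fin 2 → ℝ) : Prop :=
  ∀ i l, x i l ∈ Set.Icc (0 : ℝ) 1

/-- The 2-dimensional percentile mechanism induced by row vectors `V l` (the `l`-th
coordinate percentile mechanism): the `l`-th coordinate of facility `j` is the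
`(⌊V l j (n-1)⌋+1)`-th smallest `l`-th coordinate among the reports. -/
def PM2 {n m : ℕ} (V : Fin 2 → Fin m → ℝ) :
    (Fin n → Fin 2 → ℝ) → Fin m → Fin 2 → ℝ :=
  fun x j l => percLoc (fun i => x i l) (V l j)

/-- Equilibrium Stability for 2-dimensional mechanisms. -/
def EquilibriumStable2 {n m : ℕ} (k : Fin m → ℕ)
    (M : (Fin n → Fin 2 → ℝ) → Fin m → Fin 2 → ℝ) : Prop :=
  ∀ x, InUnit2 x → ∀ s s', isNE2 x (M x) k s → isNE2 x (M x) k s' →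
    SW2 x (M x) k s = SW2 x (M x) k s'

/-- Optimal Social Welfare over facility locations in `([0,1]^2)^m` and Nash equilibria. -/
def SWopt2 {n m : ℕ} (k : Fin m → ℕ) (x : Fin n → Fin 2 → ℝ) : ℝ :=
  sSup {w | ∃ y : Fin m → Fin 2 → ℝ, InUnit2 y ∧ ∃ s, isNE2 x y k s ∧ w = SW2 x y k s}

/-- Social Welfare achieved by a 2-dimensional mechanism. -/
def SWmech2 {n m : ℕ} (k : Fin m → ℕ) (M : (Fin n → Fin 2 → ℝ) → Fin m → Fin 2 → ℝ)
    (x : Fin n → Fin 2 → ℝ) : ℝ :=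
  sSup {w | ∃ s, isNE2 x (M x) k s ∧ w = SW2 x (M x) k s}

/-- Approximation ratio of a 2-dimensional mechanism. -/
def approxRatio2 {n m : ℕ} (k : Fin m → ℕ)
    (M : (Fin n → Fin 2 → ℝ) → Fin m → Fin 2 → ℝ) : ℝ :=
  sSup {r | ∃ x : Fin n → Fin 2 → ℝ, InUnit2 x ∧ r = SWopt2 k x / SWmech2 k M x}

/-- Embedding of a one-dimensional instance on the `l`-th axis. -/
def embedAxis {n : ℕ} (l : Fin 2) (z : Fin n → ℝ) : Fin n → Fin 2 → ℝ :=
  fun i l' => if l' = l then z i else 0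

end

noncomputable section Aux

open Finset

variable {n m : ℕ}

/-- Preceders of agent `i` in profile `s`. -/
def Pset (x : Fin n → ℝ) (y : Fin m → ℝ) (s : Fin n → Fin m) (i : Fin n) : Set (Fin n) :=
  {i' | s i' = s i ∧ Prec x (y (s i)) i' i}

/-- Agent `i` is served. -/
def srv (x : Fin n → ℝ) (y : Fin m → ℝ) (k : Fin m → ℕ) (s : Fin n → Fin m) (i : Fin n) :
    Prop :=
  (Pset x y s i).ncard < k (s i)

lemma utility_eq (x : Fin n → ℝ) (y : Fin m → ℝ) (k : Fin m → ℕ) (s : Fin n → Fin m)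
    (i : Fin n) :
    utility x y k s i = if srv x y k s i then 1 - |x i - y (s i)| else 0 := by
  unfold utility srv Pset
  congr

/-- Utility with payoff `√2 - d` (the embedded 2-dimensional game). -/
def util' (x : Fin n → ℝ) (y : Fin m → ℝ) (k : Fin m → ℕ) (s : Fin n → Fin m) (i : Fin n) : ℝ :=
  if srv x y k s i then Real.sqrt 2 - |x i - y (s i)| else 0

def isNE' (x : Fin n → ℝ) (y : Fin m → ℝ) (k : Fin m → ℕ) (s : Fin n → Fin m) : Prop :=
  ∀ (i : Fin n) (j : Fin m),
    util' x y k (Function.update s i j) i ≤ util' x y k s i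

def SW'' (x : Fin n → ℝ) (y : Fin m → ℝ) (k : Fin m → ℕ) (s : Fin n → Fin m) : ℝ :=
  ∑ i, util' x y k s i

lemma Prec_irrefl (x : Fin n → ℝ) (yy : ℝ) (i : Fin n) : ¬ Prec x yy i i := by
  rintro (h | ⟨-, h⟩) <;> exact absurd h (by simp)

/-- The key into the lexicographic order. -/
def pkey (x : Fin n → ℝ) (yy : ℝ) (i : Fin n) : ℝ ×ₗ Fin n := toLex (|x i - yy|, i)

lemma Prec_iff_key {x : Fin n → ℝ} {yy : ℝ} {i' i : Fin n} :
    Prec x yy i' i ↔ pkey x yy i' < pkey x yy i := by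
  rw [pkey, pkey, Prod.Lex.lt_iff]; rfl

lemma pkey_inj (x : Fin n → ℝ) (yy : ℝ) : Function.Injective (pkey x yy) := by
  intro a b h
  have := congrArg (fun p => (ofLex p).2) h
  simpa [pkey] using this

lemma Prec_trans {x : Fin n → ℝ} {yy : ℝ} {a b c : Fin n}
    (h1 : Prec x yy a b) (h2 : Prec x yy b c) : Prec x yy a c := by
  rw [Prec_iff_key] at *
  exact h1.trans h2

lemma sqrt_two_ge_one : (1 : ℝ) ≤ Real.sqrt 2 := by
  rw [show (1:ℝ) = Real.sqrt 1 from (Real.sqrt_one).symm]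
  exact Real.sqrt_le_sqrt (by norm_num)

lemma abs_sub_le_one {a b : ℝ} (ha : a ∈ Set.Icc (0:ℝ) 1) (hb : b ∈ Set.Icc (0:ℝ) 1) :
    |a - b| ≤ 1 := by
  rw [abs_sub_le_iff]
  constructor <;> [skip; skip] <;> obtain ⟨h1, h2⟩ := ha <;> obtain ⟨h3, h4⟩ := hb <;> linarith

lemma util'_nonneg {x : Fin n → ℝ} {y : Fin m → ℝ} {k : Fin m → ℕ} {s : Fin n → Fin m}
    {i : Fin n} (h : |x i - y (s i)| ≤ 1) : 0 ≤ util' x y k s i := by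
  rw [util']
  split
  · have := sqrt_two_ge_one; linarith
  · exact le_rfl

lemma utility_nonneg {x : Fin n → ℝ} {y : Fin m → ℝ} {k : Fin m → ℕ} {s : Fin n → Fin m}
    {i : Fin n} (h : |x i - y (s i)| ≤ 1) : 0 ≤ utility x y k s i := by
  rw [utility_eq]
  split
  · linarith
  · exact le_rfl

end Aux
noncomputable section Aux2

open Finset

variable {n m : ℕ}

lemma Pset_update_subset_of_at_a {x : Fin n → ℝ} {y : Fin m → ℝ}
    {q : Fin n → Fin m} {i w : Fin n} {b : Fin m}
    (hb : b ≠ q i) (hw : w ≠ i) (hqw : q w = q i) :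
    Pset x y (Function.update q i b) w ⊆ Pset x y q w := by
  have hq1w : Function.update q i b w = q w := Function.update_of_ne hw b q
  rintro i' ⟨h1, h2⟩
  rw [hq1w] at h1 h2
  have hne : i' ≠ i := by
    intro h; subst h
    rw [Function.update_self] at h1
    exact hb (h1.trans hqw)
  rw [Function.update_of_ne hne] at h1
  exact ⟨h1, h2⟩

/-- Removing agent `i` (unserved at its facility `q i`) from its facility does not change
the utility or service status of any other agent at that facility. -/
lemma update_of_at_a {x : Fin n → ℝ} {y : Fin m → ℝ} {k : Fin m → ℕ}
    {q : Fin n → Fin m} {i w : Fin n} {b : Fin m}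
    (hb : b ≠ q i) (hw : w ≠ i) (hqw : q w = q i)
    (H : k (q i) ≤ (Pset x y q i).ncard) :
    utility x y k (Function.update q i b) w = utility x y k q w ∧
    (srv x y k q w → srv x y k (Function.update q i b) w) := by
  have hq1w : Function.update q i b w = q w := Function.update_of_ne hw b q
  have hsub : Pset x y (Function.update q i b) w ⊆ Pset x y q w :=
    Pset_update_subset_of_at_a hb hw hqw
  by_cases hPi : Prec x (y (q w)) i w
  · -- both unserved : the preceders of i all precede w and stay
    have h1 : Pset x y q i ⊆ Pset x y (Function.update q i b) w := by
      rintro i' ⟨e1, e2⟩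
      have hne : i' ≠ i := by
        intro h; subst h; exact Prec_irrefl x _ i' e2
      refine ⟨?_, ?_⟩
      · show Function.update q i b i' = Function.update q i b w
        rw [hq1w, Function.update_of_ne hne, e1, hqw]
      · show Prec x (y (Function.update q i b w)) i' w
        rw [hq1w]
        rw [hqw] at hPi ⊢
        exact Prec_trans e2 hPi
    have c1 : k (q i) ≤ (Pset x y (Function.update q i b) w).ncard :=
      H.trans (Set.ncard_le_ncard h1 (Set.toFinite _))
    have c2 : k (q i) ≤ (Pset x y q w).ncard :=
      c1.trans (Set.ncard_le_ncard hsub (Set.toFinite _))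
    constructor
    · rw [utility_eq, utility_eq, if_neg, if_neg]
      · rw [srv, not_lt, hqw]; exact c2
      · rw [srv, not_lt, hq1w, hqw]; exact c1
    · intro hsw
      exact absurd hsw (by rw [srv, not_lt, hqw]; exact c2)
  · -- the preceder sets agree
    have heq : Pset x y (Function.update q i b) w = Pset x y q w := by
      refine subset_antisymm hsub ?_
      rintro i' ⟨h1, h2⟩
      have hne : i' ≠ i := by
        intro h; subst h; exact hPi h2
      refine ⟨?_, ?_⟩
      · show Function.update q i b i' = Function.update q i b w
        rw [hq1w, Function.update_of_ne hne]; exact h1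
      · show Prec x (y (Function.update q i b w)) i' w
        rw [hq1w]; exact h2
    constructor
    · rw [utility_eq, utility_eq]
      have hiff : srv x y k (Function.update q i b) w ↔ srv x y k q w := by
        rw [srv, srv, heq, hq1w]
      rw [if_congr hiff rfl rfl]
      split
      · rw [hq1w]
      · rfl
    · intro hsw
      rw [srv, heq, hq1w]; exact hsw

/-- Agents at a facility different from both `q i` and `b` are unaffected. -/
lemma update_of_elsewhere {x : Fin n → ℝ} {y : Fin m → ℝ} {k : Fin m → ℕ}
    {q : Fin n → Fin m} {i w : Fin n} {b : Fin m}
    (hw : w ≠ i) (h1 : q w ≠ q i) (h2 : q w ≠ b) :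
    utility x y k (Function.update q i b) w = utility x y k q w ∧
    (srv x y k q w ↔ srv x y k (Function.update q i b) w) := by
  have hq1w : Function.update q i b w = q w := Function.update_of_ne hw b q
  have heq : Pset x y (Function.update q i b) w = Pset x y q w := by
    ext i'
    constructor
    · rintro ⟨e1, e2⟩
      rw [hq1w] at e1 e2
      have hne : i' ≠ i := by
        intro h; subst h; rw [Function.update_self] at e1; exact h2 e1.symm
      rw [Function.update_of_ne hne] at e1
      exact ⟨e1, e2⟩
    · rintro ⟨e1, e2⟩
      have hne : i' ≠ i := by
        intro h; subst h; exact h1 e1.symm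
      refine ⟨?_, ?_⟩
      · show Function.update q i b i' = Function.update q i b w
        rw [hq1w, Function.update_of_ne hne]; exact e1
      · show Prec x (y (Function.update q i b w)) i' w
        rw [hq1w]; exact e2
  have hiff : srv x y k (Function.update q i b) w ↔ srv x y k q w := by
    rw [srv, srv, heq, hq1w]
  constructor
  · rw [utility_eq, utility_eq, if_congr hiff rfl rfl]
    split
    · rw [hq1w]
    · rfl
  · exact hiff.symm

/-- Effect on agents at the target facility `b` of agent `i` (at distance `1`) arriving. -/
lemma update_of_at_b {x : Fin n → ℝ} {y : Fin m → ℝ} {k : Fin m → ℕ}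
    {q : Fin n → Fin m} {i w : Fin n} {b : Fin m}
    (hb : b ≠ q i) (hw : w ≠ i) (hqw : q w = b)
    (hxb : |x w - y b| ≤ 1) (hdi : |x i - y b| = 1) :
    utility x y k (Function.update q i b) w = utility x y k q w ∧
    (srv x y k q w → srv x y k (Function.update q i b) w ∨ i < w) := by
  have hq1w : Function.update q i b w = q w := Function.update_of_ne hw b q
  have hsub : Pset x y q w ⊆ Pset x y (Function.update q i b) w := by
    rintro i' ⟨e1, e2⟩
    have hne : i' ≠ i := by
      intro h; subst h; exact hb ((hqw ▸ e1).symm)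
    refine ⟨?_, ?_⟩
    · show Function.update q i b i' = Function.update q i b w
      rw [hq1w, Function.update_of_ne hne]; exact e1
    · show Prec x (y (Function.update q i b w)) i' w
      rw [hq1w]; exact e2
  have hsub2 : Pset x y (Function.update q i b) w ⊆ Pset x y q w ∪ {i} := by
    rintro i' ⟨e1, e2⟩
    rw [hq1w] at e1 e2
    by_cases hne : i' = i
    · right; simp [hne]
    · left
      rw [Function.update_of_ne hne] at e1
      exact ⟨e1, e2⟩
  by_cases hs1 : srv x y k (Function.update q i b) w
  · -- w stays served, same value
    have hsq : srv x y k q w := by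
      rw [srv] at hs1 ⊢
      rw [hq1w] at hs1
      exact lt_of_le_of_lt (Set.ncard_le_ncard hsub (Set.toFinite _)) hs1
    constructor
    · rw [utility_eq, utility_eq, if_pos hs1, if_pos hsq, hq1w]
    · intro _; left; exact hs1
  · -- w unserved after the move
    by_cases hsq : srv x y k q w
    · -- a flip: i must precede w, so w is also at distance 1
      have hiP : i ∈ Pset x y (Function.update q i b) w := by
        by_contra hiP
        apply hs1
        have hss : Pset x y (Function.update q i b) w ⊆ Pset x y q w := by
          intro i' hi'
          rcases hsub2 hi' with h | h
          · exact h
          · rw [Set.mem_singleton_iff] at h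
            exact absurd (h ▸ hi') hiP
        rw [srv, hq1w]
        exact lt_of_le_of_lt (Set.ncard_le_ncard hss (Set.toFinite _)) hsq
      have hPrec : Prec x (y b) i w := by
        have := hiP.2
        rwa [hq1w, hqw] at this
      have hww : |x w - y b| = 1 := by
        rcases hPrec with h | ⟨h, -⟩
        · rw [hdi] at h; linarith
        · rw [hdi] at h; linarith [h.symm]
      have hiw : i < w := by
        rcases hPrec with h | ⟨-, h⟩
        · rw [hdi, hww] at h; exact absurd h (lt_irrefl 1)
        · exact h
      constructor
      · rw [utility_eq, utility_eq, if_neg hs1, if_pos hsq, hqw, hww]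
        norm_num
      · intro _; right; exact hiw
    · exact ⟨by rw [utility_eq, utility_eq, if_neg hs1, if_neg hsq], fun h => absurd h hsq⟩

end Aux2
noncomputable section Aux3

open Finset

variable {n m : ℕ}

lemma step_lemma {x : Fin n → ℝ} {y : Fin m → ℝ} {k : Fin m → ℕ}
    (hx : InUnit x) (hy : ∀ j, y j ∈ Set.Icc (0:ℝ) 1)
    {s : Fin n → Fin m} (hNE : isNE x y k s)
    {i : Fin n} {b : Fin m}
    (hb : b ≠ s i)
    (hunsrv : ¬ srv x y k s i)
    (hsrv1 : srv x y k (Function.update s i b) i)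
    (hdi : |x i - y b| = 1) :
    isNE x y k (Function.update s i b) ∧
    (∀ w, utility x y k (Function.update s i b) w = utility x y k s w) ∧
    (∀ w, ¬ srv x y k (Function.update s i b) w → w ≠ i ∧ (¬ srv x y k s w ∨ i < w)) := by
  have habs : ∀ (w : Fin n) (j : Fin m), |x w - y j| ≤ 1 :=
    fun w j => abs_sub_le_one (hx w) (hy j)
  have hH : k (s i) ≤ (Pset x y s i).ncard := not_lt.mp hunsrv
  -- pointwise utility equality
  have hpt : ∀ w, utility x y k (Function.update s i b) w = utility x y k s w := by
    intro w
    by_cases hwi : w = i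
    · subst hwi
      rw [utility_eq, utility_eq, if_pos hsrv1, if_neg hunsrv, Function.update_self, hdi]
      norm_num
    · by_cases hwa : s w = s i
      · exact (update_of_at_a hb hwi hwa hH).1
      · by_cases hwb : s w = b
        · exact (update_of_at_b hb hwi hwb (habs w b) hdi).1
        · exact (update_of_elsewhere hwi hwa hwb).1
  refine ⟨?_, hpt, ?_⟩
  · -- Nash equilibrium preserved
    intro w j'
    by_cases hwi : w = i
    · subst hwi
      rw [Function.update_idem, hpt w]
      exact hNE w j'
    · rw [hpt w]
      rw [Function.update_comm (Ne.symm hwi)]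
      set q : Fin n → Fin m := Function.update s w j' with hq
      have hqi : q i = s i := Function.update_of_ne (Ne.symm hwi) j' s
      have hqww : q w = j' := Function.update_self w j' s
      have key : utility x y k (Function.update q i b) w ≤ utility x y k q w := by
        by_cases hja : j' = s i
        · -- w moves to i's old facility
          have H' : k (q i) ≤ (Pset x y q i).ncard := by
            rw [hqi]
            refine hH.trans (Set.ncard_le_ncard ?_ (Set.toFinite _))
            rintro i' ⟨e1, e2⟩
            have hne : i' ≠ i := by
              intro h; subst h; exact Prec_irrefl x _ i' e2
            refine ⟨?_, ?_⟩
            · show q i' = q i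
              rw [hqi]
              by_cases hiw : i' = w
              · subst hiw; rw [hq, Function.update_self]; exact hja
              · rw [hq, Function.update_of_ne hiw]; exact e1
            · show Prec x (y (q i)) i' i
              rw [hqi]; exact e2
          have hb' : b ≠ q i := by rw [hqi]; exact hb
          exact le_of_eq (update_of_at_a hb' hwi (by rw [hqww, hja, hqi]) H').1
        · by_cases hjb : j' = b
          · -- w moves to b
            have hb' : b ≠ q i := by rw [hqi]; exact hb
            have hqwb : q w = b := by rw [hqww, hjb]
            exact le_of_eq (update_of_at_b hb' hwi hqwb (habs w b) hdi).1
          · exact le_of_eq (update_of_elsewhere hwi (by rw [hqww, hqi]; exact hja)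
              (by rw [hqww]; exact hjb)).1
      calc utility x y k (Function.update q i b) w ≤ utility x y k q w := key
        _ ≤ utility x y k s w := hNE w j'
  · -- unserved set control
    intro w hw1
    by_cases hwi : w = i
    · subst hwi; exact absurd hsrv1 hw1
    · refine ⟨hwi, ?_⟩
      by_cases hwa : s w = s i
      · left; intro hsw
        exact hw1 ((update_of_at_a hb hwi hwa hH).2 hsw)
      · by_cases hwb : s w = b
        · by_cases hsw : srv x y k s w
          · rcases (update_of_at_b hb hwi hwb (habs w b) hdi).2 hsw with h | h
            · exact absurd h hw1
            · right; exact h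
          · left; exact hsw
        · left; intro hsw
          exact hw1 ((update_of_elsewhere hwi hwa hwb).2.mp hsw)

end Aux3
noncomputable section Aux4

open Finset

variable {n m : ℕ}

/-- Set of unserved agents. -/
def USet (x : Fin n → ℝ) (y : Fin m → ℝ) (k : Fin m → ℕ) (s : Fin n → Fin m) :
    Finset (Fin n) :=
  Finset.univ.filter (fun w => ¬ srv x y k s w)

/-- Potential: weighted count of unserved agents, higher priority weighs more. -/
def Phi (x : Fin n → ℝ) (y : Fin m → ℝ) (k : Fin m → ℕ) (s : Fin n → Fin m) : ℕ :=
  ∑ w ∈ USet x y k s, 2 ^ (n - w.val)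

lemma geom_aux : ∀ K : ℕ, (∑ p ∈ Finset.range K, 2 ^ p) + 1 = 2 ^ K := by
  intro K
  induction K with
  | zero => simp
  | succ K ih => rw [Finset.sum_range_succ, pow_succ]; omega

/-- From a profitable deviation in the `√2`-payoff game at a 1-d Nash equilibrium,
extract the structure of the deviation. -/
lemma trigger_facts {x : Fin n → ℝ} {y : Fin m → ℝ} {k : Fin m → ℕ}
    {s : Fin n → Fin m} {i : Fin n} {b : Fin m}
    (habs : ∀ (w : Fin n) (j : Fin m), |x w - y j| ≤ 1)
    (hNE : isNE x y k s)
    (hib : util' x y k s i < util' x y k (Function.update s i b) i) :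
    b ≠ s i ∧ ¬ srv x y k s i ∧ srv x y k (Function.update s i b) i ∧ |x i - y b| = 1 := by
  have hbne : b ≠ s i := by
    intro h; subst h
    rw [Function.update_eq_self] at hib
    exact lt_irrefl _ hib
  have hnn : 0 ≤ util' x y k s i := util'_nonneg (habs i (s i))
  have hsrv1 : srv x y k (Function.update s i b) i := by
    by_contra hc
    simp only [util'] at hib hnn
    rw [if_neg hc] at hib
    linarith
  have hub : Function.update s i b i = b := Function.update_self i b s
  have hdev : util' x y k (Function.update s i b) i = Real.sqrt 2 - |x i - y b| := by
    rw [util', if_pos hsrv1, hub]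
  have hudev : utility x y k (Function.update s i b) i = 1 - |x i - y b| := by
    rw [utility_eq, if_pos hsrv1, hub]
  have hunsrv : ¬ srv x y k s i := by
    intro hsrvs
    have h1 : |x i - y b| < |x i - y (s i)| := by
      rw [hdev, util', if_pos hsrvs] at hib
      linarith
    have h2 := hNE i b
    rw [hudev, utility_eq, if_pos hsrvs] at h2
    linarith
  have hdi : |x i - y b| = 1 := by
    have h2 := hNE i b
    rw [hudev, utility_eq, if_neg hunsrv] at h2
    have := habs i b
    linarith
  exact ⟨hbne, hunsrv, hsrv1, hdi⟩

lemma Phi_lt {x : Fin n → ℝ} {y : Fin m → ℝ} {k : Fin m → ℕ}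
    {s s₁ : Fin n → Fin m} {i : Fin n}
    (hi : ¬ srv x y k s i)
    (hcontrol : ∀ w, ¬ srv x y k s₁ w → w ≠ i ∧ (¬ srv x y k s w ∨ i < w)) :
    Phi x y k s₁ < Phi x y k s := by
  classical
  set T : Finset (Fin n) := Finset.univ.filter (fun w => i < w) with hT
  have hsub : USet x y k s₁ ⊆ ((USet x y k s).erase i) ∪ T := by
    intro w hw
    rw [USet, mem_filter] at hw
    obtain ⟨hne, h2⟩ := hcontrol w hw.2
    rcases h2 with h | h
    · exact mem_union_left _ (mem_erase.mpr ⟨hne, by rw [USet, mem_filter]; exact ⟨mem_univ _, h⟩⟩)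
    · exact mem_union_right _ (by rw [hT, mem_filter]; exact ⟨mem_univ _, h⟩)
  have hTsum : (∑ w ∈ T, 2 ^ (n - w.val)) < 2 ^ (n - i.val) := by
    have himg : ∀ w₁ ∈ T, ∀ w₂ ∈ T, n - w₁.val = n - w₂.val → w₁ = w₂ := by
      intro w₁ h₁ w₂ h₂ he
      have := w₁.isLt
      have := w₂.isLt
      exact Fin.ext (by omega)
    have himgsum : ∑ p ∈ T.image (fun w : Fin n => n - w.val), 2 ^ p = ∑ w ∈ T, 2 ^ (n - w.val) :=
      Finset.sum_image himg
    rw [← himgsum]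
    have hss : T.image (fun w => n - w.val) ⊆ Finset.range (n - i.val) := by
      intro p hp
      rw [mem_image] at hp
      obtain ⟨w, hw, rfl⟩ := hp
      rw [hT, mem_filter] at hw
      have h1 : i.val < w.val := hw.2
      have := w.isLt
      rw [mem_range]
      omega
    calc ∑ p ∈ T.image (fun w => n - w.val), 2 ^ p
        ≤ ∑ p ∈ Finset.range (n - i.val), 2 ^ p :=
          Finset.sum_le_sum_of_subset hss
      _ < 2 ^ (n - i.val) := by have := geom_aux (n - i.val); omega
  have hiU : i ∈ USet x y k s := by rw [USet, mem_filter]; exact ⟨mem_univ _, hi⟩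
  have hPhis : Phi x y k s = 2 ^ (n - i.val) + ∑ w ∈ (USet x y k s).erase i, 2 ^ (n - w.val) :=
    (Finset.add_sum_erase _ _ hiU).symm
  have h1 : Phi x y k s₁ ≤ ∑ w ∈ ((USet x y k s).erase i) ∪ T, 2 ^ (n - w.val) :=
    Finset.sum_le_sum_of_subset hsub
  have h2 : (∑ w ∈ ((USet x y k s).erase i) ∪ T, 2 ^ (n - w.val)) ≤
      (∑ w ∈ (USet x y k s).erase i, 2 ^ (n - w.val)) + ∑ w ∈ T, 2 ^ (n - w.val) := by
    have := Finset.sum_union_inter (s₁ := (USet x y k s).erase i) (s₂ := T)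
      (f := fun w : Fin n => 2 ^ (n - w.val))
    omega
  omega

/-- Any 1-dimensional Nash equilibrium can be transformed into a Nash equilibrium of the
`√2`-payoff game with the same (1-dimensional) social welfare. -/
lemma fix_lemma {x : Fin n → ℝ} {y : Fin m → ℝ} {k : Fin m → ℕ}
    (hx : InUnit x) (hy : ∀ j, y j ∈ Set.Icc (0:ℝ) 1) :
    ∀ (N : ℕ) (s : Fin n → Fin m), Phi x y k s ≤ N → isNE x y k s →
      ∃ t, isNE' x y k t ∧ SW x y k t = SW x y k s := by
  have habs : ∀ (w : Fin n) (j : Fin m), |x w - y j| ≤ 1 :=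
    fun w j => abs_sub_le_one (hx w) (hy j)
  have main : ∀ (N : ℕ) (s : Fin n → Fin m), Phi x y k s ≤ N → isNE x y k s →
      (∃ t, isNE' x y k t ∧ SW x y k t = SW x y k s) := by
    intro N
    induction N with
    | zero =>
      intro s hP hNE
      by_cases hNE' : isNE' x y k s
      · exact ⟨s, hNE', rfl⟩
      · exfalso
        rw [isNE'] at hNE'
        push_neg at hNE'
        obtain ⟨i, b, hib⟩ := hNE'
        obtain ⟨hbne, hunsrv, hsrv1, hdi⟩ := trigger_facts habs hNE hib
        obtain ⟨-, -, hctl⟩ := step_lemma hx hy hNE hbne hunsrv hsrv1 hdi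
        have := Phi_lt hunsrv hctl
        omega
    | succ N ih =>
      intro s hP hNE
      by_cases hNE' : isNE' x y k s
      · exact ⟨s, hNE', rfl⟩
      · rw [isNE'] at hNE'
        push_neg at hNE'
        obtain ⟨i, b, hib⟩ := hNE'
        obtain ⟨hbne, hunsrv, hsrv1, hdi⟩ := trigger_facts habs hNE hib
        obtain ⟨hNE1, hpt, hctl⟩ := step_lemma hx hy hNE hbne hunsrv hsrv1 hdi
        have hPhi := Phi_lt hunsrv hctl
        obtain ⟨t, ht1, ht2⟩ := ih (Function.update s i b) (by omega) hNE1
        refine ⟨t, ht1, ht2.trans ?_⟩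
        rw [SW, SW]
        exact Finset.sum_congr rfl (fun w _ => hpt w)
  exact main

end Aux4
noncomputable section Aux5

open Finset

variable {n m : ℕ}

lemma Pset_eq_filter {x : Fin n → ℝ} {y : Fin m → ℝ} {t : Fin n → Fin m} {j : Fin m}
    {w : Fin n} (hw : t w = j) :
    Pset x y t w = ↑((Finset.univ.filter (fun w' => t w' = j)).filter
      (fun b => Prec x (y j) b w)) := by
  ext i'
  simp only [Pset, Set.mem_setOf_eq, coe_filter, mem_filter, mem_univ, true_and, hw]

/-- At most `k j` agents are served at facility `j` (in any profile). -/
lemma served_le {x : Fin n → ℝ} {y : Fin m → ℝ} {k : Fin m → ℕ} {t : Fin n → Fin m}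
    (j : Fin m) :
    (Finset.univ.filter (fun w => t w = j ∧ srv x y k t w)).card ≤ k j := by
  by_contra hc
  push_neg at hc
  set Sf := Finset.univ.filter (fun w => t w = j ∧ srv x y k t w) with hSf
  have hne : Sf.Nonempty := by
    rw [← Finset.card_pos]; omega
  obtain ⟨w, hwmem, hwmax⟩ := Finset.exists_max_image Sf (pkey x (y j)) hne
  have hwmem' := hwmem
  rw [hSf, mem_filter] at hwmem'
  obtain ⟨-, hwj, hwsrv⟩ := hwmem'
  have hsub : (↑(Sf.erase w) : Set (Fin n)) ⊆ Pset x y t w := by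
    intro b hb
    rw [Finset.coe_erase, Set.mem_diff, Set.mem_singleton_iff] at hb
    obtain ⟨hb1, hb2⟩ := hb
    rw [Finset.mem_coe, hSf, mem_filter] at hb1
    obtain ⟨-, hbj, hbsrv⟩ := hb1
    have hle := hwmax b (by rw [hSf, mem_filter]; exact ⟨mem_univ _, hbj, hbsrv⟩)
    have hlt : pkey x (y j) b < pkey x (y j) w :=
      lt_of_le_of_ne hle (fun h => hb2 (pkey_inj x (y j) h))
    exact ⟨hbj.trans hwj.symm, by rw [hwj]; exact Prec_iff_key.mpr hlt⟩
  have h1 : k j ≤ (Sf.erase w).card := by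
    have := Finset.card_erase_of_mem hwmem
    omega
  have h2 : (Sf.erase w).card ≤ (Pset x y t w).ncard := by
    rw [← Set.ncard_coe_finset]
    exact Set.ncard_le_ncard hsub (Set.toFinite _)
  rw [srv, hwj] at hwsrv
  omega

/-- If a facility attracts at least `K` agents, then at least `K` of them have fewer than
`K` preceders (with respect to any fixed distance order). -/
lemma min_served (x : Fin n → ℝ) (yy : ℝ) :
    ∀ (K : ℕ) (B : Finset (Fin n)), K ≤ B.card →
      K ≤ (B.filter (fun w => (B.filter (fun b => Prec x yy b w)).card < K)).card := by
  intro K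
  induction K with
  | zero => intro B _; omega
  | succ K ih =>
    intro B hB
    have hne : B.Nonempty := by rw [← Finset.card_pos]; omega
    obtain ⟨w₀, hw₀, hmin⟩ := Finset.exists_min_image B (pkey x yy) hne
    set B' := B.erase w₀ with hB'
    have hcard : K ≤ B'.card := by
      have h := Finset.card_erase_of_mem hw₀
      rw [← hB'] at h
      omega
    have hstep := ih B' hcard
    have hPrecw₀ : ∀ w ∈ B', Prec x yy w₀ w := by
      intro w hw
      rw [hB', mem_erase] at hw
      exact Prec_iff_key.mpr (lt_of_le_of_ne (hmin w hw.2) (fun h => hw.1.symm (pkey_inj x yy h)))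
    have hcount : ∀ w ∈ B', (B.filter (fun b => Prec x yy b w)).card
        = (B'.filter (fun b => Prec x yy b w)).card + 1 := by
      intro w hw
      have hfe : B'.filter (fun b => Prec x yy b w) = (B.filter (fun b => Prec x yy b w)).erase w₀ := by
        rw [hB']
        exact Finset.filter_erase (p := fun b => Prec x yy b w) w₀ B
      have hw₀mem : w₀ ∈ B.filter (fun b => Prec x yy b w) := by
        rw [mem_filter]; exact ⟨hw₀, hPrecw₀ w hw⟩
      rw [hfe, Finset.card_erase_of_mem hw₀mem]
      have : 0 < (B.filter (fun b => Prec x yy b w)).card := Finset.card_pos.mpr ⟨w₀, hw₀mem⟩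
      omega
    have hw₀zero : (B.filter (fun b => Prec x yy b w₀)).card = 0 := by
      rw [Finset.card_eq_zero, Finset.filter_eq_empty_iff]
      intro b hb hPb
      have := hmin b hb
      have := Prec_iff_key.mp hPb
      exact absurd this (not_lt.mpr (hmin b hb))
    have hsubD : insert w₀ (B'.filter (fun w => (B'.filter (fun b => Prec x yy b w)).card < K))
        ⊆ B.filter (fun w => (B.filter (fun b => Prec x yy b w)).card < K + 1) := by
      intro w hw
      rw [Finset.mem_insert] at hw
      rcases hw with rfl | hw
      · rw [mem_filter, hw₀zero]; exact ⟨hw₀, by omega⟩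
      · rw [mem_filter] at hw ⊢
        obtain ⟨hw1, hw2⟩ := hw
        refine ⟨(Finset.erase_subset _ _) hw1, ?_⟩
        rw [hcount w hw1]
        omega
    have hinsc : (insert w₀ (B'.filter (fun w => (B'.filter (fun b => Prec x yy b w)).card < K))).card
        = (B'.filter (fun w => (B'.filter (fun b => Prec x yy b w)).card < K)).card + 1 := by
      rw [Finset.card_insert_of_notMem]
      intro hmem
      have := (Finset.filter_subset _ _) hmem
      rw [hB', Finset.mem_erase] at this
      exact this.1 rfl
    have := Finset.card_le_card hsubD
    omega

end Aux5
noncomputable section Aux6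

open Finset

variable {n : ℕ}

lemma one_lt_sqrt_two : (1:ℝ) < Real.sqrt 2 := by
  rw [show (1:ℝ) = Real.sqrt 1 from (Real.sqrt_one).symm]
  exact Real.sqrt_lt_sqrt (by norm_num) (by norm_num)

lemma served_fiber (x : Fin n → ℝ) (y : Fin 2 → ℝ) (k : Fin 2 → ℕ) (t : Fin n → Fin 2) :
    (Finset.univ.filter (fun w => srv x y k t w)).card =
      ∑ j : Fin 2, (Finset.univ.filter (fun w => t w = j ∧ srv x y k t w)).card := by
  rw [Finset.card_eq_sum_card_fiberwise (f := t) (t := Finset.univ) (fun w _ => mem_univ _)]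
  refine Finset.sum_congr rfl (fun j _ => congrArg Finset.card ?_)
  rw [Finset.filter_filter]
  ext w
  simp only [Finset.mem_filter, Finset.mem_univ, true_and]
  tauto

lemma served_card_eq {x : Fin n → ℝ} {y : Fin 2 → ℝ} {k : Fin 2 → ℕ} {t : Fin n → Fin 2}
    (hx : InUnit x) (hy : ∀ j, y j ∈ Set.Icc (0:ℝ) 1)
    (hkn : k 0 + k 1 < n) (hNE' : isNE' x y k t) (j : Fin 2) :
    (Finset.univ.filter (fun w => t w = j ∧ srv x y k t w)).card = k j := by
  have habs : ∀ (w : Fin n) (j' : Fin 2), |x w - y j'| ≤ 1 :=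
    fun w j' => abs_sub_le_one (hx w) (hy j')
  refine le_antisymm (served_le j) ?_
  -- there is an unserved agent
  have htot : (Finset.univ.filter (fun w => srv x y k t w)).card ≤ k 0 + k 1 := by
    rw [served_fiber, Fin.sum_univ_two]
    have h0 := served_le (x := x) (y := y) (k := k) (t := t) (0 : Fin 2)
    have h1 := served_le (x := x) (y := y) (k := k) (t := t) (1 : Fin 2)
    omega
  have hun : ∃ u, ¬ srv x y k t u := by
    by_contra hcon
    push_neg at hcon
    have : Finset.univ.filter (fun w => srv x y k t w) = Finset.univ :=
      Finset.filter_true_of_mem (fun u _ => hcon u)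
    rw [this, Finset.card_univ, Fintype.card_fin] at htot
    omega
  obtain ⟨u, hu⟩ := hun
  -- u cannot be served at j either, so there are at least k j agents at j
  have hdev := hNE' u j
  simp only [util'] at hdev
  rw [if_neg hu] at hdev
  have hnd : ¬ srv x y k (Function.update t u j) u := by
    intro hsrv
    rw [if_pos hsrv, Function.update_self] at hdev
    have := habs u j
    have := one_lt_sqrt_two
    linarith
  rw [srv, not_lt, Function.update_self] at hnd
  set B := Finset.univ.filter (fun w => t w = j) with hB
  have hPsub : Pset x y (Function.update t u j) u ⊆ ↑B := by
    rintro i' ⟨e1, e2⟩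
    have hne : i' ≠ u := by
      intro h; subst h; exact Prec_irrefl x _ i' e2
    rw [Function.update_self, Function.update_of_ne hne] at e1
    rw [hB, Finset.coe_filter]
    simp [e1]
  have hBcard : k j ≤ B.card := by
    calc k j ≤ (Pset x y (Function.update t u j) u).ncard := hnd
      _ ≤ (↑B : Set (Fin n)).ncard := Set.ncard_le_ncard hPsub (Set.toFinite _)
      _ = B.card := Set.ncard_coe_finset B
  have hmin := min_served x (y j) (k j) B hBcard
  have hsubf : B.filter (fun w => (B.filter (fun b => Prec x (y j) b w)).card < k j)
      ⊆ Finset.univ.filter (fun w => t w = j ∧ srv x y k t w) := by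
    intro w hw
    rw [mem_filter] at hw
    obtain ⟨hw1, hw2⟩ := hw
    rw [hB, mem_filter] at hw1
    rw [mem_filter]
    refine ⟨mem_univ _, hw1.2, ?_⟩
    rw [srv, Pset_eq_filter hw1.2, Set.ncard_coe_finset, hw1.2]
    rw [hB] at hw2
    exact hw2
  exact hmin.trans (Finset.card_le_card hsubf)

lemma served_total {x : Fin n → ℝ} {y : Fin 2 → ℝ} {k : Fin 2 → ℕ} {t : Fin n → Fin 2}
    (hx : InUnit x) (hy : ∀ j, y j ∈ Set.Icc (0:ℝ) 1)
    (hkn : k 0 + k 1 < n) (hNE' : isNE' x y k t) :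
    (Finset.univ.filter (fun w => srv x y k t w)).card = k 0 + k 1 := by
  rw [served_fiber, Fin.sum_univ_two,
    served_card_eq hx hy hkn hNE' 0, served_card_eq hx hy hkn hNE' 1]

lemma SW''_eq_SW {x : Fin n → ℝ} {y : Fin 2 → ℝ} {k : Fin 2 → ℕ} {t : Fin n → Fin 2}
    (hx : InUnit x) (hy : ∀ j, y j ∈ Set.Icc (0:ℝ) 1)
    (hkn : k 0 + k 1 < n) (hNE' : isNE' x y k t) :
    SW'' x y k t = SW x y k t + (Real.sqrt 2 - 1) * ((k 0 + k 1 : ℕ)) := by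
  have hpt : ∀ w, util' x y k t w =
      utility x y k t w + (if srv x y k t w then Real.sqrt 2 - 1 else 0) := by
    intro w
    rw [util', utility_eq]
    split
    · ring
    · ring
  rw [SW'', SW]
  rw [Finset.sum_congr rfl (fun w _ => hpt w), Finset.sum_add_distrib]
  congr 1
  rw [← Finset.sum_filter, Finset.sum_const, served_total hx hy hkn hNE']
  rw [nsmul_eq_mul, mul_comm]

end Aux6
noncomputable section Aux7

open Finset

variable {n : ℕ}

lemma percLoc_mem {z : Fin n → ℝ} (hn : 0 < n) (hz : InUnit z) {v : ℝ}
    (hv : v ∈ Set.Icc (0:ℝ) 1) : percLoc z v ∈ Set.Icc (0:ℝ) 1 := by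
  have hn1 : (1:ℝ) ≤ (n:ℝ) := by exact_mod_cast hn
  have hidx : (⌊((n:ℝ)-1)*v⌋).toNat < n := by
    have h1 : ((n:ℝ)-1)*v ≤ (n:ℝ)-1 := by nlinarith [hv.1, hv.2]
    have h2 : ⌊((n:ℝ)-1)*v⌋ ≤ ⌊(n:ℝ)-1⌋ := Int.floor_le_floor h1
    have h3 : ⌊(n:ℝ)-1⌋ = (n:ℤ) - 1 := by
      rw [show (n:ℝ)-1 = (((n:ℤ) - 1 : ℤ) : ℝ) by push_cast; ring, Int.floor_intCast]
    omega
  rw [percLoc, sortedVal, dif_pos hidx]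
  exact hz _

lemma PM2_embed (V : Fin 2 → Fin 2 → ℝ) (l : Fin 2) (z : Fin n → ℝ) :
    PM2 V (embedAxis l z) = fun j l' => if l' = l then percLoc z (V l j) else 0 := by
  funext j l'
  show percLoc (fun i => embedAxis l z i l') (V l' j) = _
  by_cases h : l' = l
  · subst h
    rw [if_pos rfl]
    congr 1
    funext i
    simp [embedAxis]
  · rw [if_neg h]
    have hzero : (fun i => embedAxis l z i l') = fun _ => (0:ℝ) := by
      funext i; simp [embedAxis, h]
    rw [hzero, percLoc, sortedVal]
    split <;> rfl

lemma dist2_embed (l : Fin 2) (a b : ℝ) :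
    dist2 (fun l' => if l' = l then a else 0) (fun l' => if l' = l then b else 0) = |a - b| := by
  rw [dist2, Fin.sum_univ_two]
  fin_cases l
  · norm_num
    rw [Real.sqrt_sq_eq_abs]
  · norm_num
    rw [Real.sqrt_sq_eq_abs]

lemma utility2_embed (V : Fin 2 → Fin 2 → ℝ) (l : Fin 2) (z : Fin n → ℝ)
    (k : Fin 2 → ℕ) (s : Fin n → Fin 2) (i : Fin n) :
    utility2 (embedAxis l z) (PM2 V (embedAxis l z)) k s i =
      util' z (fun j => percLoc z (V l j)) k s i := by
  rw [PM2_embed]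
  have hd : ∀ (w : Fin n) (j : Fin 2), dist2 (embedAxis l z w)
      ((fun (j : Fin 2) (l' : Fin 2) => if l' = l then percLoc z (V l j) else 0) j)
      = |z w - percLoc z (V l j)| := by
    intro w j
    exact dist2_embed l (z w) (percLoc z (V l j))
  simp only [utility2, util', srv, Pset, Prec2, Prec, hd]
  congr 1

lemma isNE2_iff (V : Fin 2 → Fin 2 → ℝ) (l : Fin 2) (z : Fin n → ℝ)
    (k : Fin 2 → ℕ) (t : Fin n → Fin 2) :
    isNE2 (embedAxis l z) (PM2 V (embedAxis l z)) k t ↔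
      isNE' z (fun j => percLoc z (V l j)) k t := by
  simp only [isNE2, isNE', utility2_embed V l z k]

lemma SW2_eq (V : Fin 2 → Fin 2 → ℝ) (l : Fin 2) (z : Fin n → ℝ)
    (k : Fin 2 → ℕ) (t : Fin n → Fin 2) :
    SW2 (embedAxis l z) (PM2 V (embedAxis l z)) k t =
      SW'' z (fun j => percLoc z (V l j)) k t := by
  rw [SW2, SW'']
  exact Finset.sum_congr rfl (fun i _ => utility2_embed V l z k t i)

end Aux7

/-- If a coordinate percentile mechanism of a 2-dimensional percentile
mechanism admits a one-dimensional instance whose pure Nash equilibria yield different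
Social Welfare values, then embedding that instance on the corresponding axis yields a
2-dimensional instance on which the percentile mechanism's output induces pure Nash
equilibria with different Social Welfare values (so an ES 2-dimensional percentile
mechanism has ES coordinate percentile mechanisms). -/
theorem ES_2dim_implies_ES_coordinates (n : ℕ) (k : Fin 2 → ℕ) (hk : ∀ j, 0 < k j)
    (hkn : k 0 + k 1 < n)
    (V : Fin 2 → Fin 2 → ℝ) (hV : ∀ l j, V l j ∈ Set.Icc (0 : ℝ) 1)
    (l : Fin 2) (z : Fin n → ℝ) (hz : InUnit z)
    (s s' : Fin n → Fin 2)
    (hs : isNE z (fun j => percLoc z (V l j)) k s)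
    (hs' : isNE z (fun j => percLoc z (V l j)) k s')
    (hne : SW z (fun j => percLoc z (V l j)) k s ≠
      SW z (fun j => percLoc z (V l j)) k s') :
    ∃ t t' : Fin n → Fin 2,
      isNE2 (embedAxis l z) (PM2 V (embedAxis l z)) k t ∧
      isNE2 (embedAxis l z) (PM2 V (embedAxis l z)) k t' ∧
      SW2 (embedAxis l z) (PM2 V (embedAxis l z)) k t ≠
        SW2 (embedAxis l z) (PM2 V (embedAxis l z)) k t' := by
  have hn : 0 < n := by omega
  have hy : ∀ j, (fun j => percLoc z (V l j)) j ∈ Set.Icc (0:ℝ) 1 :=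
    fun j => percLoc_mem hn hz (hV l j)
  obtain ⟨t, htNE, htSW⟩ := fix_lemma hz hy (Phi z (fun j => percLoc z (V l j)) k s) s le_rfl hs
  obtain ⟨t', htNE', htSW'⟩ :=
    fix_lemma hz hy (Phi z (fun j => percLoc z (V l j)) k s') s' le_rfl hs'
  refine ⟨t, t', (isNE2_iff V l z k t).mpr htNE, (isNE2_iff V l z k t').mpr htNE', ?_⟩
  rw [SW2_eq, SW2_eq, SW''_eq_SW hz hy hkn htNE, SW''_eq_SW hz hy hkn htNE', htSW, htSW']
  intro h
  apply hne
  linarith
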